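/- Let p ∈ [0,1], θ ∈ [0, π/2], φ ∈ ℝ. Consider the 4×4 matrix N = ((3p²+p)/(3p²+1))·u u† + ((p−p²)/(3p²+1))·v v† + ((1−p)²/(4(3p²+1)))·I₄, where u = cos θ·|00⟩ + sin θ·e^{−iφ}·|11⟩ and v = cos θ·|00⟩ − sin θ·e^{−iφ}·|11⟩ (this is the normalized state obtained by projecting the third qubit of the distilled noisy GHZ state onto cos θ·|0⟩ + sin θ·e^{iφ}·|1⟩). Then the partial transpose N^{T₂} is positive semidefinite if and only if (1−p)² ≥ 8p²·sin(2θ). -/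

import Mathlib

open Matrix BigOperators ComplexOrder

noncomputable section

/-- The rank-one matrix `x x†`. -/
def rankOne {n : Type*} (x : n → ℂ) : Matrix n n ℂ :=
  Matrix.of fun i j => x i * (starRingEnd ℂ) (x j)

/-- Partial transpose on the second factor of a bipartite matrix. -/
def pt2 {a b : ℕ} (M : Matrix (Fin a × Fin b) (Fin a × Fin b) ℂ) :
    Matrix (Fin a × Fin b) (Fin a × Fin b) ℂ :=
  Matrix.of fun p q => M (p.1, q.2) (q.1, p.2)

lemma rankOne_posSemidef {n : Type*} [Fintype n] [DecidableEq n] (x : n → ℂ) :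
    (rankOne x).PosSemidef := by
  rw [posSemidef_iff_dotProduct_mulVec]
  constructor
  · ext i j
    simp [rankOne, Matrix.conjTranspose_apply, mul_comm]
  · intro y
    have h : star y ⬝ᵥ (rankOne x) *ᵥ y = star (star x ⬝ᵥ y) * (star x ⬝ᵥ y) := by
      simp [rankOne, dotProduct, Matrix.mulVec, Finset.mul_sum, Finset.sum_mul, star_sum]
      rw [Finset.sum_comm]
      apply Finset.sum_congr rfl; intro i _
      apply Finset.sum_congr rfl; intro j _
      ring
    rw [h]
    exact star_mul_self_nonneg _

lemma smul_rankOne_posSemidef {n : Type*} [Fintype n] [DecidableEq n] (r : ℝ) (hr : 0 ≤ r)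
    (x : n → ℂ) : ((r : ℂ) • rankOne x).PosSemidef := by
  rw [posSemidef_iff_dotProduct_mulVec]
  constructor
  · ext i j
    simp [rankOne, Matrix.conjTranspose_apply, Complex.conj_ofReal, mul_comm]
  · intro y
    rw [smul_mulVec, dotProduct_smul]
    have h0 : (0:ℂ) ≤ (r:ℂ) := by exact_mod_cast hr
    exact mul_nonneg h0 ((rankOne_posSemidef x).dotProduct_mulVec_nonneg y)

set_option maxHeartbeats 1000000 in
/-- For the normalized state obtained by projecting the third qubit of the distilled
noisy GHZ state onto `cos θ |0⟩ + sin θ e^{iφ} |1⟩`, namely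
`N = ((3p²+p)/(3p²+1)) u u† + ((p-p²)/(3p²+1)) v v† + ((1-p)²/(4(3p²+1))) I₄`
with `u = cos θ |00⟩ + sin θ e^{-iφ} |11⟩`, `v = cos θ |00⟩ - sin θ e^{-iφ} |11⟩`,
the partial transpose `N^{T₂}` is positive semidefinite iff `(1-p)² ≥ 8p² sin(2θ)`. -/
theorem pt_distilled_localized_posSemidef_iff (p θ φ : ℝ)
    (hp0 : 0 ≤ p) (hp1 : p ≤ 1) (hθ0 : 0 ≤ θ) (hθ1 : θ ≤ Real.pi / 2)
    (u v : Fin 2 × Fin 2 → ℂ)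
    (hu : u = fun x => if x = (0, 0) then (Real.cos θ : ℂ)
      else if x = (1, 1) then (Real.sin θ : ℂ) * Complex.exp (-(Complex.I * (φ : ℂ))) else 0)
    (hv : v = fun x => if x = (0, 0) then (Real.cos θ : ℂ)
      else if x = (1, 1) then -((Real.sin θ : ℂ) * Complex.exp (-(Complex.I * (φ : ℂ)))) else 0)
    (N : Matrix (Fin 2 × Fin 2) (Fin 2 × Fin 2) ℂ)
    (hN : N = (((3 * p ^ 2 + p) / (3 * p ^ 2 + 1) : ℝ) : ℂ) • rankOne u
        + (((p - p ^ 2) / (3 * p ^ 2 + 1) : ℝ) : ℂ) • rankOne v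
        + ((((1 - p) ^ 2) / (4 * (3 * p ^ 2 + 1)) : ℝ) : ℂ) • 1) :
    (pt2 N).PosSemidef ↔ (1 - p) ^ 2 ≥ 8 * p ^ 2 * Real.sin (2 * θ) := by
  subst hu hv hN
  have hpi := Real.pi_pos
  have hD : (0:ℝ) < 3 * p ^ 2 + 1 := by positivity
  have hDC : ((3:ℂ) * (p:ℂ) ^ 2 + 1) ≠ 0 := by
    have : ((3 * p ^ 2 + 1 : ℝ) : ℂ) ≠ 0 := by exact_mod_cast hD.ne'
    push_cast at this; exact this
  have hEne : Complex.exp (Complex.I * (φ:ℂ)) ≠ 0 := Complex.exp_ne_zero _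
  have hEinv : Complex.exp (-(Complex.I * (φ:ℂ))) = (Complex.exp (Complex.I * (φ:ℂ)))⁻¹ := by
    rw [Complex.exp_neg]
  have hconjE2 : (starRingEnd ℂ) (Complex.exp (Complex.I * (φ:ℂ)))
      = (Complex.exp (Complex.I * (φ:ℂ)))⁻¹ := by
    rw [← Complex.exp_neg, ← Complex.exp_conj]
    congr 1
    simp [Complex.conj_I, Complex.conj_ofReal]
    try ring
  have hs : 0 ≤ Real.sin θ := Real.sin_nonneg_of_nonneg_of_le_pi hθ0 (by linarith)
  have hc : 0 ≤ Real.cos θ := Real.cos_nonneg_of_mem_Icc ⟨by linarith, hθ1⟩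
  have hs2 : Real.sin (2 * θ) = 2 * Real.sin θ * Real.cos θ := Real.sin_two_mul θ
  set w1 : Fin 2 × Fin 2 → ℂ := fun x => if x = (0,0) then 1 else 0 with hw1
  set w2 : Fin 2 × Fin 2 → ℂ := fun x => if x = (1,1) then 1 else 0 with hw2
  set w3 : Fin 2 × Fin 2 → ℂ := fun x => if x = (0,1) then 1
      else if x = (1,0) then Complex.exp (-(Complex.I * (φ:ℂ))) else 0 with hw3
  set w4 : Fin 2 × Fin 2 → ℂ := fun x => if x = (0,1) then 1
      else if x = (1,0) then -Complex.exp (-(Complex.I * (φ:ℂ))) else 0 with hw4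
  have key : pt2 ((((3 * p ^ 2 + p) / (3 * p ^ 2 + 1) : ℝ) : ℂ) • rankOne (fun x => if x = (0, 0) then (Real.cos θ : ℂ)
      else if x = (1, 1) then (Real.sin θ : ℂ) * Complex.exp (-(Complex.I * (φ : ℂ))) else 0)
        + (((p - p ^ 2) / (3 * p ^ 2 + 1) : ℝ) : ℂ) • rankOne (fun x => if x = (0, 0) then (Real.cos θ : ℂ)
      else if x = (1, 1) then -((Real.sin θ : ℂ) * Complex.exp (-(Complex.I * (φ : ℂ)))) else 0)
        + ((((1 - p) ^ 2) / (4 * (3 * p ^ 2 + 1)) : ℝ) : ℂ) • 1)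
      = (((3 * p ^ 2 + p) / (3 * p ^ 2 + 1) * Real.cos θ ^ 2
            + (p - p ^ 2) / (3 * p ^ 2 + 1) * Real.cos θ ^ 2
            + (1 - p) ^ 2 / (4 * (3 * p ^ 2 + 1)) : ℝ) : ℂ) • rankOne w1
        + (((3 * p ^ 2 + p) / (3 * p ^ 2 + 1) * Real.sin θ ^ 2
            + (p - p ^ 2) / (3 * p ^ 2 + 1) * Real.sin θ ^ 2
            + (1 - p) ^ 2 / (4 * (3 * p ^ 2 + 1)) : ℝ) : ℂ) • rankOne w2
        + ((((1 - p) ^ 2 / (4 * (3 * p ^ 2 + 1))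
            + 4 * p ^ 2 * Real.sin θ * Real.cos θ / (3 * p ^ 2 + 1)) / 2 : ℝ) : ℂ) • rankOne w3
        + ((((1 - p) ^ 2 / (4 * (3 * p ^ 2 + 1))
            - 4 * p ^ 2 * Real.sin θ * Real.cos θ / (3 * p ^ 2 + 1)) / 2 : ℝ) : ℂ) • rankOne w4 := by
    ext ⟨i, j⟩ ⟨k, l⟩
    fin_cases i <;> fin_cases j <;> fin_cases k <;> fin_cases l <;>
      · simp only [pt2, rankOne, Matrix.add_apply, Matrix.smul_apply, Matrix.one_apply,
          Matrix.of_apply, smul_eq_mul, hw1, hw2, hw3, hw4, Prod.mk.injEq]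
        norm_num [hEinv, hconjE2, map_inv₀, Complex.conj_ofReal,
          -Complex.ofReal_cos, -Complex.ofReal_sin]
        try push_cast [-Complex.ofReal_cos, -Complex.ofReal_sin]
        try field_simp
        try ring
  rw [key]
  constructor
  · intro hpsd
    set x : Fin 2 × Fin 2 → ℂ := fun y => if y = (0,1) then 1
        else if y = (1,0) then -Complex.exp (-(Complex.I * (φ:ℂ))) else 0 with hx
    have hq := hpsd.dotProduct_mulVec_nonneg x
    have hval : star x ⬝ᵥ ((((3 * p ^ 2 + p) / (3 * p ^ 2 + 1) * Real.cos θ ^ 2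
            + (p - p ^ 2) / (3 * p ^ 2 + 1) * Real.cos θ ^ 2
            + (1 - p) ^ 2 / (4 * (3 * p ^ 2 + 1)) : ℝ) : ℂ) • rankOne w1
        + (((3 * p ^ 2 + p) / (3 * p ^ 2 + 1) * Real.sin θ ^ 2
            + (p - p ^ 2) / (3 * p ^ 2 + 1) * Real.sin θ ^ 2
            + (1 - p) ^ 2 / (4 * (3 * p ^ 2 + 1)) : ℝ) : ℂ) • rankOne w2
        + ((((1 - p) ^ 2 / (4 * (3 * p ^ 2 + 1))
            + 4 * p ^ 2 * Real.sin θ * Real.cos θ / (3 * p ^ 2 + 1)) / 2 : ℝ) : ℂ) • rankOne w3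
        + ((((1 - p) ^ 2 / (4 * (3 * p ^ 2 + 1))
            - 4 * p ^ 2 * Real.sin θ * Real.cos θ / (3 * p ^ 2 + 1)) / 2 : ℝ) : ℂ) • rankOne w4) *ᵥ x
        = (((2 * ((1 - p) ^ 2 / (4 * (3 * p ^ 2 + 1))
            - 4 * p ^ 2 * Real.sin θ * Real.cos θ / (3 * p ^ 2 + 1)) : ℝ)) : ℂ) := by
      simp [hx, hw1, hw2, hw3, hw4, rankOne, dotProduct, Matrix.mulVec,
        Fintype.sum_prod_type, Fin.sum_univ_two, Prod.ext_iff,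
        hEinv, hconjE2, map_inv₀, Complex.conj_ofReal]
      field_simp
      ring
    rw [hval] at hq
    have hreal : (0:ℝ) ≤ 2 * ((1 - p) ^ 2 / (4 * (3 * p ^ 2 + 1))
        - 4 * p ^ 2 * Real.sin θ * Real.cos θ / (3 * p ^ 2 + 1)) := by
      exact_mod_cast hq
    rw [hs2]
    have h4D : (0:ℝ) < 4 * (3 * p ^ 2 + 1) := by positivity
    rw [ge_iff_le, ← sub_nonneg]
    have heq : (1 - p) ^ 2 - 8 * p ^ 2 * (2 * Real.sin θ * Real.cos θ)
        = (4 * (3 * p ^ 2 + 1)) * (2 * ((1 - p) ^ 2 / (4 * (3 * p ^ 2 + 1))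
            - 4 * p ^ 2 * Real.sin θ * Real.cos θ / (3 * p ^ 2 + 1))) / 2 := by
      field_simp
      ring
    rw [heq]
    positivity
  · intro h
    have hα : 0 ≤ (3 * p ^ 2 + p) / (3 * p ^ 2 + 1) * Real.cos θ ^ 2
        + (p - p ^ 2) / (3 * p ^ 2 + 1) * Real.cos θ ^ 2
        + (1 - p) ^ 2 / (4 * (3 * p ^ 2 + 1)) := by
      have h1 : 0 ≤ (3 * p ^ 2 + p) / (3 * p ^ 2 + 1) := div_nonneg (by nlinarith) hD.le
      have h2 : 0 ≤ (p - p ^ 2) / (3 * p ^ 2 + 1) := div_nonneg (by nlinarith) hD.le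
      have h3 : (0:ℝ) ≤ (1 - p) ^ 2 / (4 * (3 * p ^ 2 + 1)) := by positivity
      nlinarith [sq_nonneg (Real.cos θ)]
    have hβ : 0 ≤ (3 * p ^ 2 + p) / (3 * p ^ 2 + 1) * Real.sin θ ^ 2
        + (p - p ^ 2) / (3 * p ^ 2 + 1) * Real.sin θ ^ 2
        + (1 - p) ^ 2 / (4 * (3 * p ^ 2 + 1)) := by
      have h1 : 0 ≤ (3 * p ^ 2 + p) / (3 * p ^ 2 + 1) := div_nonneg (by nlinarith) hD.le
      have h2 : 0 ≤ (p - p ^ 2) / (3 * p ^ 2 + 1) := div_nonneg (by nlinarith) hD.le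
      have h3 : (0:ℝ) ≤ (1 - p) ^ 2 / (4 * (3 * p ^ 2 + 1)) := by positivity
      nlinarith [sq_nonneg (Real.sin θ)]
    have hM : 0 ≤ 4 * p ^ 2 * Real.sin θ * Real.cos θ / (3 * p ^ 2 + 1) :=
      div_nonneg (by positivity) hD.le
    have hC : (0:ℝ) ≤ (1 - p) ^ 2 / (4 * (3 * p ^ 2 + 1)) := by positivity
    have hγ : 0 ≤ ((1 - p) ^ 2 / (4 * (3 * p ^ 2 + 1))
        + 4 * p ^ 2 * Real.sin θ * Real.cos θ / (3 * p ^ 2 + 1)) / 2 := by linarith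
    have hδ : 0 ≤ ((1 - p) ^ 2 / (4 * (3 * p ^ 2 + 1))
        - 4 * p ^ 2 * Real.sin θ * Real.cos θ / (3 * p ^ 2 + 1)) / 2 := by
      rw [hs2] at h
      have hnum : 0 ≤ (1 - p) ^ 2 - 16 * p ^ 2 * (Real.sin θ * Real.cos θ) := by nlinarith
      have heq : ((1 - p) ^ 2 / (4 * (3 * p ^ 2 + 1))
          - 4 * p ^ 2 * Real.sin θ * Real.cos θ / (3 * p ^ 2 + 1)) / 2
          = ((1 - p) ^ 2 - 16 * p ^ 2 * (Real.sin θ * Real.cos θ)) / (8 * (3 * p ^ 2 + 1)) := by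
        field_simp
        ring
      rw [heq]
      positivity
    exact (((smul_rankOne_posSemidef _ hα w1).add (smul_rankOne_posSemidef _ hβ w2)).add
      (smul_rankOne_posSemidef _ hγ w3)).add (smul_rankOne_posSemidef _ hδ w4)
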